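/- Let Γ' be obtained from a finite connected network Γ = (V,E,c) by adding a new vertex x' joined to vertices x_1,…,x_m ∈ V with conductances a_1,…,a_m > 0. Fix λ ≥ 0, a weight ω on V, ω(x') > 0, and define ω'(x) = ω(x)/√(1+ω(x')²) on V' = V ∪ {x'}. Let q = q_ω + λ on V and p = q_{ω'} + λ on V'. With ρ_i = √(a_i ω(x_i) ω(x')), σ_i = (ρ_i/ω(x_i)) ε_{x_i}, σ = Σ_{i=1}^m a_i ε_{x_i}, and α = λ + (1/ω(x')²) Σ_{i=1}^m ρ_i², the Schrödinger operator L'_p of Γ' satisfies: for u ∈ C(V') and x ∈ V, L'_p u(x) = (L_q + Σ_{i=1}^m P_{σ_i})(u|_V)(x) − u(x')σ(x), and L'_p u(x') = α u(x') − ⟨σ, u|_V⟩. -/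

import Mathlib

open Finset

noncomputable def ip {V : Type*} [Fintype V] (u v : V → ℝ) : ℝ := ∑ x, u x * v x

noncomputable def lap {V : Type*} [Fintype V] (c : V → V → ℝ) (u : V → ℝ) : V → ℝ :=
  fun x => ∑ y, c x y * (u x - u y)

/-- Conductance of the network `Γ'` obtained by joining a new vertex (`none`) to the
vertices `x 1, …, x m` with conductances `a 1, …, a m`. -/
noncomputable def cnew {V : Type*} [DecidableEq V] {m : ℕ}
    (c : V → V → ℝ) (x : Fin m → V) (a : Fin m → ℝ) : Option V → Option V → ℝ
  | some y, some z => c y z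
  | some y, none => ∑ i, if y = x i then a i else 0
  | none, some z => ∑ i, if z = x i then a i else 0
  | none, none => 0

/-- The Schrödinger operator `L'_p` of the network `Γ'` obtained by adding a new vertex `x'`
decomposes on `V` as `L_q + Σ P_{σ_i} − P_{σ,ε_{x'}}` and on `x'` as `−P_{ε_{x'},σ} + α P_{ε_{x'}}`. -/
theorem stmt7 {V : Type*} [Fintype V] [DecidableEq V] [Nonempty V] {m : ℕ}
    (c : V → V → ℝ) (ω : V → ℝ) (lam w' : ℝ) (x : Fin m → V) (a : Fin m → ℝ)
    -- Γ is a finite connected network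
    (hc_symm : ∀ y z, c y z = c z y)
    (hc_nonneg : ∀ y z, 0 ≤ c y z)
    (hc_diag : ∀ y, c y y = 0)
    (hconn : ∀ y z : V, Relation.ReflTransGen (fun s t => 0 < c s t) y z)
    -- ω a unit weight, λ ≥ 0, ω(x') > 0, conductances a_i > 0 to distinct vertices
    (hω_pos : ∀ y, 0 < ω y) (hω_unit : ∑ y, (ω y) ^ 2 = 1)
    (hlam : 0 ≤ lam) (hw' : 0 < w')
    (ha : ∀ i, 0 < a i) (hx : Function.Injective x) :
    ∀ u : Option V → ℝ,
      (∀ y : V,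
        lap (cnew c x a) u (some y)
          + (-(lap (cnew c x a)
                  (fun z => z.elim w' ω / Real.sqrt (1 + w' ^ 2)) (some y))
              / (ω y / Real.sqrt (1 + w' ^ 2)) + lam) * u (some y)
        = (lap c (fun z => u (some z)) y + (-(lap c ω y) / ω y + lam) * u (some y))
          + (∑ i, ip (fun z => (Real.sqrt (a i * ω (x i) * w') / ω (x i)) *
                (if z = x i then 1 else 0)) (fun z => u (some z))
              * ((Real.sqrt (a i * ω (x i) * w') / ω (x i)) *
                (if y = x i then 1 else 0)))
          - u none * (∑ i, a i * (if y = x i then 1 else 0))) ∧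
      (lap (cnew c x a) u none
          + (-(lap (cnew c x a)
                  (fun z => z.elim w' ω / Real.sqrt (1 + w' ^ 2)) none)
              / (w' / Real.sqrt (1 + w' ^ 2)) + lam) * u none
        = (lam + (1 / w' ^ 2) * ∑ i, Real.sqrt (a i * ω (x i) * w') ^ 2) * u none
          - ip (fun z => ∑ i, a i * (if z = x i then 1 else 0)) (fun z => u (some z))) := by

  intro u
  have hs : (0:ℝ) < Real.sqrt (1 + w' ^ 2) := Real.sqrt_pos.mpr (by positivity)
  have hs0 : Real.sqrt (1 + w' ^ 2) ≠ 0 := ne_of_gt hs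
  have hρ : ∀ i, Real.sqrt (a i * ω (x i) * w') ^ 2 = a i * ω (x i) * w' := fun i =>
    Real.sq_sqrt (by have := (ha i).le; have := (hω_pos (x i)).le; positivity)
  have key : ∀ f : V → ℝ, ∑ y, (∑ i, if y = x i then a i else 0) * f y
      = ∑ i, a i * f (x i) := by
    intro f
    simp only [Finset.sum_mul, ite_mul, zero_mul]
    rw [Finset.sum_comm]
    refine Finset.sum_congr rfl fun i _ => ?_
    rw [Finset.sum_ite_eq' Finset.univ (x i) (fun y => a i * f y)]
    simp
  constructor
  · intro y
    have hωy : ω y ≠ 0 := (hω_pos y).ne'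
    have h1 : lap (cnew c x a) u (some y)
        = lap c (fun z => u (some z)) y
          + (∑ i, if y = x i then a i else 0) * (u (some y) - u none) := by
      simp only [lap, Fintype.sum_option, cnew]
      ring
    have h2 : lap (cnew c x a) (fun z => z.elim w' ω / Real.sqrt (1 + w' ^ 2)) (some y)
        = (lap c ω y + (∑ i, if y = x i then a i else 0) * (ω y - w'))
            / Real.sqrt (1 + w' ^ 2) := by
      simp only [lap, Fintype.sum_option, cnew, Option.elim_none, Option.elim_some,
        div_sub_div_same, ← mul_div_assoc]
      rw [← Finset.sum_div, add_div]
      ring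
    have h3 : ∀ i, ip (fun z => (Real.sqrt (a i * ω (x i) * w') / ω (x i)) *
        (if z = x i then 1 else 0)) (fun z => u (some z))
        = Real.sqrt (a i * ω (x i) * w') / ω (x i) * u (some (x i)) := by
      intro i
      simp only [ip, mul_ite, mul_one, mul_zero, ite_mul, zero_mul]
      rw [Finset.sum_ite_eq' Finset.univ (x i)]
      simp
    have h4 : ∑ i, (Real.sqrt (a i * ω (x i) * w') / ω (x i) * u (some (x i)))
          * (Real.sqrt (a i * ω (x i) * w') / ω (x i) * (if y = x i then 1 else 0))
        = (∑ i, if y = x i then a i else 0) * (w' / ω y) * u (some y) := by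
      rw [Finset.sum_mul, Finset.sum_mul]
      refine Finset.sum_congr rfl fun i _ => ?_
      by_cases h : y = x i
      · subst h
        rw [if_pos rfl, if_pos rfl, mul_one]
        have hg : Real.sqrt (a i * ω (x i) * w') / ω (x i) * u (some (x i)) *
            (Real.sqrt (a i * ω (x i) * w') / ω (x i))
            = Real.sqrt (a i * ω (x i) * w') ^ 2 / ω (x i) ^ 2 * u (some (x i)) := by ring
        rw [hg, hρ i]
        have h0 : ω (x i) ≠ 0 := (hω_pos (x i)).ne'
        field_simp
      · rw [if_neg h, if_neg h]
        ring
    rw [h1, h2]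
    simp only [h3]
    rw [h4]
    field_simp
    simp only [mul_ite, mul_one, mul_zero]
    ring
  · have h1 : lap (cnew c x a) u none
        = (∑ i, a i) * u none - ∑ i, a i * u (some (x i)) := by
      simp only [lap, Fintype.sum_option, cnew]
      rw [key (fun y => u none - u (some y))]
      simp only [mul_sub, Finset.sum_sub_distrib, Finset.sum_mul]
      ring
    have h2 : lap (cnew c x a) (fun z => z.elim w' ω / Real.sqrt (1 + w' ^ 2)) none
        = ((∑ i, a i) * w' - ∑ i, a i * ω (x i)) / Real.sqrt (1 + w' ^ 2) := by
      simp only [lap, Fintype.sum_option, cnew, Option.elim_none, Option.elim_some,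
        div_sub_div_same, ← mul_div_assoc]
      rw [← Finset.sum_div]
      rw [key (fun y => w' - ω y)]
      simp only [mul_sub, Finset.sum_sub_distrib, Finset.sum_mul]
      ring_nf
    have h3 : ip (fun z => ∑ i, a i * (if z = x i then 1 else 0)) (fun z => u (some z))
        = ∑ i, a i * u (some (x i)) := by
      simp only [ip, mul_ite, mul_one, mul_zero]
      rw [key (fun z => u (some z))]
    have h4 : ∑ i, Real.sqrt (a i * ω (x i) * w') ^ 2 = (∑ i, a i * ω (x i)) * w' := by
      simp only [hρ]
      rw [Finset.sum_mul]
    rw [h1, h2, h3, h4]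
    field_simp
    ring
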